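/- Let J be the T_G^*-ideal generated by x_{1,e}x_{2,e} − x_{2,e}x_{1,e} and x_{1,e} − x_{1,e}^*. If two (G,*)-monomials m_1, m_2 evaluate on generic (G,*)-matrices to matrices having the same nonzero entry in the same position, then m_1 ≡ m_2 mod J. -/

import Mathlib

open Matrix

noncomputable section

/-- The free (G,*)-algebra: the monoid algebra of the free monoid on the variables
x_{k,g} (marker `false`) and x_{k,g}^* (marker `true`), (k,g) ∈ ℕ × G. -/
abbrev FreeGS (F G : Type*) [Field F] := MonoidAlgebra F (FreeMonoid (ℕ × G × Bool))

/-- Degree of a word: x_{k,g} has degree g and x_{k,g}^* has degree g⁻¹. -/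
def wdeg {G : Type*} [Group G] (w : FreeMonoid (ℕ × G × Bool)) : G :=
  ((FreeMonoid.toList w).map (fun v => if v.2.2 then v.2.1⁻¹ else v.2.1)).prod

/-- The involution on words: reverse the word and exchange starred and unstarred
variables. -/
def starW {G : Type*} (w : FreeMonoid (ℕ × G × Bool)) : FreeMonoid (ℕ × G × Bool) :=
  FreeMonoid.ofList (((FreeMonoid.toList w).map (fun v => (v.1, v.2.1, !v.2.2))).reverse)

/-- The involution of the free (G,*)-algebra. -/
def starF (F G : Type*) [Field F] : FreeGS F G →ₗ[F] FreeGS F G :=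
  MonoidAlgebra.mapDomainLinearMap F F starW

/-- The variable x_{k,c} (b = false) or x_{k,c}^* (b = true) as an element of the
free (G,*)-algebra. -/
def xvar (F : Type*) {G : Type*} [Field F] (k : ℕ) (c : G) (b : Bool) : FreeGS F G :=
  MonoidAlgebra.of F (FreeMonoid (ℕ × G × Bool)) (FreeMonoid.of (k, c, b))

/-- The endomorphism of the free (G,*)-algebra induced by a substitution of the
variables. -/
def substHom {F G : Type*} [Field F] (v : ℕ × G × Bool → FreeGS F G) :
    FreeGS F G →ₐ[F] FreeGS F G :=
  MonoidAlgebra.lift F (FreeGS F G) (FreeMonoid (ℕ × G × Bool)) (FreeMonoid.lift v)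

/-- A substitution is admissible when x_{k,g} is sent to a homogeneous element of
degree g and x_{k,g}^* is sent to its star. -/
def Admissible {F G : Type*} [Field F] [Group G] (v : ℕ × G × Bool → FreeGS F G) : Prop :=
  (∀ (k : ℕ) (c : G), ∀ w ∈ (v (k, c, false)).coeff.support, wdeg w = c) ∧
  (∀ (k : ℕ) (c : G), v (k, c, true) = starF F G (v (k, c, false)))

/-- The T_G^*-ideal generated by a set S: the smallest two-sided ideal containing all
admissible substitution instances of elements of S. -/
def TIdealGen {F G : Type*} [Field F] [Group G] (S : Set (FreeGS F G)) : Set (FreeGS F G) :=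
  {x | ∀ I : TwoSidedIdeal (FreeGS F G),
    (∀ f ∈ S, ∀ v, Admissible v → substHom v f ∈ I) → x ∈ I}

/-- The homogeneous component of degree c of the elementary grading of M_n(F). -/
def gradeR (F : Type*) {G : Type*} [Field F] [Group G] {n : ℕ} (g : Fin n → G) (c : G) :
    Submodule F (Matrix (Fin n) (Fin n) F) :=
  Submodule.span F {M : Matrix (Fin n) (Fin n) F | ∃ i j : Fin n,
    (g i)⁻¹ * g j = c ∧ M = Matrix.single i j 1}

/-- Evaluation of the free (G,*)-algebra on a substitution of the variables by matrices:
x_{k,g} goes to a(k,g) and x_{k,g}^* to its transpose. -/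
def evalHom {F G : Type*} [Field F] {n : ℕ} (a : ℕ × G → Matrix (Fin n) (Fin n) F) :
    FreeGS F G →ₐ[F] Matrix (Fin n) (Fin n) F :=
  MonoidAlgebra.lift F (Matrix (Fin n) (Fin n) F) (FreeMonoid (ℕ × G × Bool))
    (FreeMonoid.lift (fun v => if v.2.2 then (a (v.1, v.2.1))ᵀ else a (v.1, v.2.1)))

/-- f is a (G,*)-identity of M_n(F) with the elementary grading induced by g and the
transpose involution. -/
def IsGSId {F G : Type*} [Field F] [Group G] {n : ℕ} (g : Fin n → G) (f : FreeGS F G) :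
    Prop :=
  ∀ a : ℕ × G → Matrix (Fin n) (Fin n) F,
    (∀ k c, a (k, c) ∈ gradeR F g c) → evalHom a f = 0

set_option linter.unusedSectionVars false
open scoped Classical
namespace Stmt18Aux

variable {G : Type*} [Group G] {n : ℕ}

/-- star of a letter -/
def sl (ℓ : ℕ × G × Bool) : ℕ × G × Bool := (ℓ.1, ℓ.2.1, !ℓ.2.2)

/-- star of a word (as a list) -/
def starLst (L : List (ℕ × G × Bool)) : List (ℕ × G × Bool) :=
  (L.map (fun v => (v.1, v.2.1, !v.2.2))).reverse

/-- degree of a word (as a list) -/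
def wdegL (L : List (ℕ × G × Bool)) : G :=
  (L.map (fun v => if v.2.2 then v.2.1⁻¹ else v.2.1)).prod

lemma starW_ofList (L : List (ℕ × G × Bool)) :
    starW (FreeMonoid.ofList L) = FreeMonoid.ofList (starLst L) := rfl

lemma wdeg_ofList (L : List (ℕ × G × Bool)) :
    wdeg (FreeMonoid.ofList L) = wdegL L := rfl

lemma starLst_append (A B : List (ℕ × G × Bool)) :
    starLst (A ++ B) = starLst B ++ starLst A := by simp [starLst]

lemma starLst_cons (a : ℕ × G × Bool) (L : List (ℕ × G × Bool)) :
    starLst (a :: L) = starLst L ++ [sl a] := by simp [starLst, sl]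

lemma starLst_concat (a : ℕ × G × Bool) (L : List (ℕ × G × Bool)) :
    starLst (L ++ [a]) = sl a :: starLst L := by simp [starLst, sl]

lemma starLst_nil : starLst ([] : List (ℕ × G × Bool)) = [] := rfl

lemma starLst_starLst (L : List (ℕ × G × Bool)) : starLst (starLst L) = L := by
  induction L with
  | nil => rfl
  | cons a L ih =>
    rw [starLst_cons, starLst_concat, ih]
    simp [sl]

lemma wdegL_nil : wdegL ([] : List (ℕ × G × Bool)) = 1 := rfl

lemma wdegL_cons (a : ℕ × G × Bool) (L : List (ℕ × G × Bool)) :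
    wdegL (a :: L) = (if a.2.2 then a.2.1⁻¹ else a.2.1) * wdegL L := by
  simp [wdegL]

lemma wdegL_append (A B : List (ℕ × G × Bool)) :
    wdegL (A ++ B) = wdegL A * wdegL B := by simp [wdegL]

/-- One step of a trail: from `p`, using letter `ℓ`, arriving at `y`,
traversing the edge (variable) `v`. -/
def Step (g : Fin n → G) (p : Fin n) (ℓ : ℕ × G × Bool) (y : Fin n)
    (v : ℕ × Fin n × Fin n) : Prop :=
  (ℓ.2.2 = false ∧ g p * ℓ.2.1 = g y ∧ v = (ℓ.1, p, y)) ∨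
  (ℓ.2.2 = true ∧ g y * ℓ.2.1 = g p ∧ v = (ℓ.1, y, p))

/-- A trail from `p` to `q` along the word `L`, with multiset of traversed edges `E`. -/
inductive Path (g : Fin n → G) : Fin n → List (ℕ × G × Bool) → Fin n →
    Multiset (ℕ × Fin n × Fin n) → Prop
  | nil (p : Fin n) : Path g p [] p 0
  | cons {p : Fin n} {ℓ : ℕ × G × Bool} {y : Fin n} {v : ℕ × Fin n × Fin n}
      {L : List (ℕ × G × Bool)} {q : Fin n} {E : Multiset (ℕ × Fin n × Fin n)} :
      Step g p ℓ y v → Path g y L q E → Path g p (ℓ :: L) q (v ::ₘ E)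

variable {g : Fin n → G}

lemma step_unique (hg : Function.Injective g) {p ℓ y v y' v'}
    (h1 : Step g p ℓ y v) (h2 : Step g p ℓ y' v') : y = y' ∧ v = v' := by
  rcases h1 with ⟨hb, he, hv⟩ | ⟨hb, he, hv⟩ <;>
    rcases h2 with ⟨hb', he', hv'⟩ | ⟨hb', he', hv'⟩
  · have : y = y' := hg (he ▸ he')
    exact ⟨this, by rw [hv, hv', this]⟩
  · rw [hb] at hb'; exact absurd hb' (by simp)
  · rw [hb] at hb'; exact absurd hb' (by simp)
  · have hyy : g y = g y' := by
      have := he.trans he'.symm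
      exact mul_right_cancel this
    have : y = y' := hg hyy
    exact ⟨this, by rw [hv, hv', this]⟩

lemma step_star {p ℓ y v} (h : Step g p ℓ y v) : Step g y (sl ℓ) p v := by
  rcases h with ⟨hb, he, hv⟩ | ⟨hb, he, hv⟩
  · exact Or.inr ⟨by simp [sl, hb], by simpa [sl] using he, by simpa [sl] using hv⟩
  · exact Or.inl ⟨by simp [sl, hb], by simpa [sl] using he, by simpa [sl] using hv⟩

/-- Two letters performing a step from the same vertex traversing the same edge:
same target, and the letters agree up to a star move. -/
lemma step_same_var (hg : Function.Injective g) {p ℓ y v ℓ' y'}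
    (h1 : Step g p ℓ y v) (h2 : Step g p ℓ' y' v) :
    y = y' ∧ (ℓ = ℓ' ∨ (wdegL [ℓ] = 1 ∧ starLst [ℓ] = [ℓ'])) := by
  obtain ⟨m, c, b⟩ := ℓ
  obtain ⟨m', c', b'⟩ := ℓ'
  rcases h1 with ⟨hb, he, hv⟩ | ⟨hb, he, hv⟩ <;>
    rcases h2 with ⟨hb', he', hv'⟩ | ⟨hb', he', hv'⟩ <;>
      simp only at hb hb' he he' hv hv' <;> subst hb <;> subst hb' <;>
        rw [hv] at hv'
  · -- both false
    obtain ⟨hm, -, hy⟩ : m = m' ∧ p = p ∧ y = y' := by simpa using hv'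
    subst hm; subst hy
    have : c = c' := mul_left_cancel (he.trans he'.symm)
    exact ⟨rfl, Or.inl (by rw [this])⟩
  · -- ℓ false, ℓ' true
    obtain ⟨hm, hpy', hyp⟩ : m = m' ∧ p = y' ∧ y = p := by simpa using hv'
    subst hm; subst hyp
    have hc : c = 1 := mul_eq_left.mp he
    have hc' : c' = 1 := by
      rw [← hpy'] at he'
      exact mul_eq_left.mp he'
    subst hc; subst hc'
    exact ⟨hpy', Or.inr ⟨by simp [wdegL], by simp [starLst]⟩⟩
  · -- ℓ true, ℓ' false
    obtain ⟨hm, hyp, hpy'⟩ : m = m' ∧ y = p ∧ p = y' := by simpa using hv'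
    subst hm; subst hyp
    have hc : c = 1 := mul_eq_left.mp he
    have hc' : c' = 1 := by
      rw [← hpy'] at he'
      exact mul_eq_left.mp he'
    subst hc; subst hc'
    exact ⟨hpy', Or.inr ⟨by simp [wdegL], by simp [starLst]⟩⟩
  · -- both true
    obtain ⟨hm, hy, -⟩ : m = m' ∧ y = y' ∧ p = p := by simpa using hv'
    subst hm; subst hy
    have : c = c' := mul_left_cancel (he.trans he'.symm)
    exact ⟨rfl, Or.inl (by rw [this])⟩


lemma path_append_of {p A x E₁ B q E₂} (h1 : Path g p A x E₁) (h2 : Path g x B q E₂) :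
    Path g p (A ++ B) q (E₁ + E₂) := by
  induction h1 with
  | nil p => simpa using h2
  | cons hs hp ih =>
    rw [List.cons_append, Multiset.cons_add]
    exact Path.cons hs (ih h2)

lemma path_append_destruct {p A B q E} (h : Path g p (A ++ B) q E) :
    ∃ x E₁ E₂, Path g p A x E₁ ∧ Path g x B q E₂ ∧ E = E₁ + E₂ := by
  induction A generalizing p E with
  | nil => exact ⟨p, 0, E, Path.nil p, by simpa using h, by simp⟩
  | cons ℓ A ih =>
    rw [List.cons_append] at h
    cases h with
    | cons hs hp =>
      obtain ⟨x, E₁, E₂, h1, h2, hE⟩ := ih hp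
      exact ⟨x, _ ::ₘ E₁, E₂, Path.cons hs h1, h2, by rw [hE, Multiset.cons_add]⟩

lemma path_unique (hg : Function.Injective g) {p L q E q' E'}
    (h1 : Path g p L q E) (h2 : Path g p L q' E') : q = q' ∧ E = E' := by
  induction h1 generalizing E' with
  | nil p => cases h2; exact ⟨rfl, rfl⟩
  | cons hs hp ih =>
    cases h2 with
    | cons hs' hp' =>
      obtain ⟨hy, hv⟩ := step_unique hg hs hs'
      subst hy; subst hv
      obtain ⟨hq, hE⟩ := ih hp'
      exact ⟨hq, by rw [hE]⟩

lemma path_star {p L q E} (h : Path g p L q E) : Path g q (starLst L) p E := by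
  induction h with
  | nil p => exact Path.nil p
  | @cons p ℓ y v L q E hs hp ih =>
    rw [starLst_cons]
    have h2 : Path g y [sl ℓ] p (v ::ₘ 0) := Path.cons (step_star hs) (Path.nil p)
    have h3 := path_append_of ih h2
    have hE : E + (v ::ₘ 0) = v ::ₘ E := by
      rw [show (v ::ₘ (0 : Multiset (ℕ × Fin n × Fin n))) = {v} from rfl, add_comm,
        Multiset.singleton_add]
    rwa [hE] at h3

lemma path_wdeg {p L q E} (h : Path g p L q E) : g p * wdegL L = g q := by
  induction h with
  | nil p => simp [wdegL_nil]
  | @cons p ℓ y v L q E hs hp ih =>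
    rw [wdegL_cons, ← mul_assoc]
    have : g p * (if ℓ.2.2 then ℓ.2.1⁻¹ else ℓ.2.1) = g y := by
      rcases hs with ⟨hb, he, -⟩ | ⟨hb, he, -⟩
      · rw [hb]; simpa using he
      · rw [hb, if_pos rfl]
        exact mul_inv_eq_iff_eq_mul.mpr he.symm
    rw [this, ih]

lemma path_closed_wdeg (hg : Function.Injective g) {p L E} (h : Path g p L p E) :
    wdegL L = 1 := by
  have := path_wdeg h
  have : g p * wdegL L = g p * 1 := by simpa using this
  exact mul_left_cancel this

/-- elementary moves -/
inductive Move : List (ℕ × G × Bool) → List (ℕ × G × Bool) → Prop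
  | star (A U B : List (ℕ × G × Bool)) : wdegL U = 1 →
      Move (A ++ (U ++ B)) (A ++ (starLst U ++ B))
  | swap (A U V B : List (ℕ × G × Bool)) : wdegL U = 1 → wdegL V = 1 →
      Move (A ++ (U ++ (V ++ B))) (A ++ (V ++ (U ++ B)))

/-- chains of elementary moves -/
def Rel : List (ℕ × G × Bool) → List (ℕ × G × Bool) → Prop :=
  Relation.ReflTransGen (Move (G := G))

lemma move_pres (hg : Function.Injective g) {L L' p q E}
    (hm : Move L L') (h : Path g p L q E) : Path g p L' q E := by
  cases hm with
  | star A U B hU =>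
    obtain ⟨x, E₁, E₂, h1, h2, rfl⟩ := path_append_destruct h
    obtain ⟨y, E₃, E₄, h3, h4, rfl⟩ := path_append_destruct h2
    have hxy : x = y := by
      have := path_wdeg h3
      rw [hU, mul_one] at this
      exact hg this
    subst hxy
    exact path_append_of h1 (path_append_of (path_star h3) h4)
  | swap A U V B hU hV =>
    obtain ⟨x, E₁, E₂, h1, h2, rfl⟩ := path_append_destruct h
    obtain ⟨y, E₃, E₄, h3, h4, rfl⟩ := path_append_destruct h2
    obtain ⟨z, E₅, E₆, h5, h6, rfl⟩ := path_append_destruct h4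
    have hxy : x = y := by
      have := path_wdeg h3
      rw [hU, mul_one] at this
      exact hg this
    subst hxy
    have hxz : x = z := by
      have := path_wdeg h5
      rw [hV, mul_one] at this
      exact hg this
    subst hxz
    have : Path g p (A ++ (V ++ (U ++ B))) q (E₁ + (E₅ + (E₃ + E₆))) :=
      path_append_of h1 (path_append_of h5 (path_append_of h3 h6))
    have hE : E₁ + (E₅ + (E₃ + E₆)) = E₁ + (E₃ + (E₅ + E₆)) := by
      rw [add_left_comm E₅ E₃ E₆]
    rwa [hE] at this

lemma rel_pres (hg : Function.Injective g) {L L' p q E}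
    (hr : Rel L L') (h : Path g p L q E) : Path g p L' q E := by
  induction hr with
  | refl => exact h
  | tail h1 h2 ih => exact move_pres hg h2 ih

lemma move_cons (x : ℕ × G × Bool) {L L'} (hm : Move L L') :
    Move (x :: L) (x :: L') := by
  cases hm with
  | star A U B hU =>
    have := Move.star (G := G) (x :: A) U B hU
    simpa using this
  | swap A U V B hU hV =>
    have := Move.swap (G := G) (x :: A) U V B hU hV
    simpa using this

lemma rel_cons (x : ℕ × G × Bool) {L L'} (hr : Rel L L') :
    Rel (x :: L) (x :: L') := by
  induction hr with
  | refl => exact Relation.ReflTransGen.refl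
  | tail h1 h2 ih => exact Relation.ReflTransGen.tail ih (move_cons x h2)

lemma rel_trans {L L' L'' : List (ℕ × G × Bool)} (h1 : Rel L L') (h2 : Rel L' L'') : Rel L L'' :=
  Relation.ReflTransGen.trans h1 h2

/-- locating an edge occurrence in a trail -/
lemma mem_edge_split {p L q E} (h : Path g p L q E) {v₀} (hv : v₀ ∈ E) :
    ∃ P ℓ S x y E_P E_S, L = P ++ ℓ :: S ∧ Path g p P x E_P ∧ Step g x ℓ y v₀ ∧
      Path g y S q E_S ∧ E = E_P + (v₀ ::ₘ E_S) := by
  induction h with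
  | nil p => simp at hv
  | @cons p ℓ y v L q E hs hp ih =>
    rcases Multiset.mem_cons.mp hv with h1 | h1
    · subst h1
      exact ⟨[], ℓ, L, p, y, 0, E, rfl, Path.nil p, hs, hp, by simp⟩
    · obtain ⟨P, ℓ', S, x, y', E_P, E_S, rfl, h2, h3, h4, hE⟩ := ih h1
      exact ⟨ℓ :: P, ℓ', S, x, y', v ::ₘ E_P, E_S, rfl, Path.cons hs h2, h3, h4,
        by rw [hE, Multiset.cons_add]⟩

/-- a vertex visited by the trail `(x, M)` -/
def Vis (g : Fin n → G) (x : Fin n) (M : List (ℕ × G × Bool)) (u : Fin n) : Prop :=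
  ∃ M₁ M₂ E₁, M = M₁ ++ M₂ ∧ Path g x M₁ u E₁

lemma vis_start (x : Fin n) (M : List (ℕ × G × Bool)) : Vis g x M x :=
  ⟨[], M, 0, rfl, Path.nil x⟩

lemma vis_cons {x ℓ x₁ v M u} (hs : Step g x ℓ x₁ v) (h : Vis g x₁ M u) :
    Vis g x (ℓ :: M) u := by
  obtain ⟨M₁, M₂, E₁, rfl, hp⟩ := h
  exact ⟨ℓ :: M₁, M₂, v ::ₘ E₁, rfl, Path.cons hs hp⟩

lemma step_ends {x ℓ x₁ v} (hs : Step g x ℓ x₁ v) :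
    (v.2.1 = x ∧ v.2.2 = x₁) ∨ (v.2.1 = x₁ ∧ v.2.2 = x) := by
  rcases hs with ⟨-, -, hv⟩ | ⟨-, -, hv⟩
  · exact Or.inl (by rw [hv]; exact ⟨rfl, rfl⟩)
  · exact Or.inr (by rw [hv]; exact ⟨rfl, rfl⟩)

/-- endpoints of traversed edges are visited -/
lemma edge_ends_visited {x M y E} (h : Path g x M y E) :
    ∀ v ∈ E, Vis g x M v.2.1 ∧ Vis g x M v.2.2 := by
  induction h with
  | nil p => simp
  | @cons p ℓ x₁ v M q E hs hp ih =>
    intro w hw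
    rcases Multiset.mem_cons.mp hw with h1 | h1
    · subst h1
      rcases step_ends hs with ⟨h1, h2⟩ | ⟨h1, h2⟩ <;> rw [h1, h2]
      · exact ⟨vis_start p _, vis_cons hs (vis_start x₁ _)⟩
      · exact ⟨vis_cons hs (vis_start x₁ _), vis_start p _⟩
    · obtain ⟨hA, hB⟩ := ih w h1
      exact ⟨vis_cons hs hA, vis_cons hs hB⟩

/-- if the start is outside `A` and every traversed edge has both endpoints on the
same side of `A`, then all traversed edges are outside `A`. -/
lemma path_stay {A : Set (Fin n)} {x M y E} (h : Path g x M y E)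
    (hE : ∀ v ∈ E, ((v : ℕ × Fin n × Fin n).2.1 ∈ A ↔ v.2.2 ∈ A))
    (hx : x ∉ A) : ∀ v ∈ E, (v : ℕ × Fin n × Fin n).2.1 ∉ A := by
  induction h with
  | nil p => simp
  | @cons p ℓ x₁ v M q E hs hp ih =>
    have hx₁ : x₁ ∉ A := by
      intro hmem
      have hiff := hE v (Multiset.mem_cons_self v E)
      rcases step_ends hs with ⟨h1, h2⟩ | ⟨h1, h2⟩
      · rw [h1, h2] at hiff; exact hx (hiff.mpr hmem)
      · rw [h1, h2] at hiff; exact hx (hiff.mp hmem)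
    intro w hw
    rcases Multiset.mem_cons.mp hw with h1 | h1
    · subst h1
      rcases step_ends hs with ⟨h1, -⟩ | ⟨h1, -⟩ <;> rw [h1] <;> assumption
    · exact ih (fun v hv => hE v (Multiset.mem_cons_of_mem hv)) hx₁ w h1
lemma path_cons_destruct {p ℓ L q E} (h : Path g p (ℓ :: L) q E) :
    ∃ y v E', Step g p ℓ y v ∧ Path g y L q E' ∧ E = v ::ₘ E' := by
  cases h with
  | cons hs hp => exact ⟨_, _, _, hs, hp, rfl⟩

lemma path_nil_edges {p L q} (h : Path g p L q (0 : Multiset (ℕ × Fin n × Fin n))) :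
    L = [] ∧ q = p := by
  cases L with
  | nil => cases h; exact ⟨rfl, rfl⟩
  | cons ℓ L =>
    obtain ⟨y, v, E', -, -, hEq⟩ := path_cons_destruct h
    exact absurd hEq.symm (Multiset.cons_ne_zero)

lemma front_fix (hg : Function.Injective g) {p ℓ y v₀ f w} (h1 : Step g p ℓ y v₀)
    (h2 : Step g p f w v₀) (T : List (ℕ × G × Bool)) : Rel (ℓ :: T) (f :: T) := by
  obtain ⟨-, hor⟩ := step_same_var hg h1 h2
  rcases hor with rfl | ⟨hw, hst⟩
  · exact Relation.ReflTransGen.refl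
  · have hm := Move.star (G := G) [] [ℓ] T hw
    rw [hst] at hm
    exact Relation.ReflTransGen.single (by simpa using hm)

lemma core (hg : Function.Injective g) {p q : Fin n} {E : Multiset (ℕ × Fin n × Fin n)}
    {f : ℕ × G × Bool} {w : Fin n} {v₀ : ℕ × Fin n × Fin n}
    {L₂ : List (ℕ × G × Bool)} {E' : Multiset (ℕ × Fin n × Fin n)}
    {L₁ : List (ℕ × G × Bool)}
    (h1 : Path g p L₁ q E) (hf : Step g p f w v₀) (h2 : Path g w L₂ q E')
    (hE : E = v₀ ::ₘ E') : ∃ T, Rel L₁ (f :: T) := by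
  have hv₀ : v₀ ∈ E := by rw [hE]; exact Multiset.mem_cons_self v₀ E'
  obtain ⟨P, ℓ, S, x, y, E_P, E_S, rfl, hP, hstep, hS, hEdec⟩ := mem_edge_split h1 hv₀
  have hxy : x = p ∨ y = p := by
    rcases hstep with ⟨-, -, hv⟩ | ⟨-, -, hv⟩ <;>
      rcases hf with ⟨-, -, hv'⟩ | ⟨-, -, hv'⟩ <;> rw [hv] at hv' <;>
        simp only [Prod.mk.injEq] at hv'
    · exact Or.inl hv'.2.1
    · exact Or.inr hv'.2.2
    · exact Or.inr hv'.2.1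
    · exact Or.inl hv'.2.2
  rcases hxy with hxp | hyp
  · -- the occurrence leaves p
    subst hxp
    by_cases hPnil : P = []
    · subst hPnil
      exact ⟨S, by simpa using front_fix hg hstep hf S⟩
    · -- find a closed subtrail containing the occurrence
      have hyw : y = w := (step_same_var hg hstep hf).1
      subst hyw
      have hE' : E' = E_P + E_S := by
        have h3 : v₀ ::ₘ E' = v₀ ::ₘ (E_P + E_S) := by
          rw [← hE, hEdec, ← Multiset.singleton_add, ← Multiset.singleton_add,
            add_left_comm]
        exact (Multiset.cons_inj_right v₀).mp h3
      have hzsplit : ∃ C₁ C₂ S₁ S₂, ∃ z : Fin n, ∃ E₁ E₂ E₃ E₄, P = C₁ ++ C₂ ∧ S = S₁ ++ S₂ ∧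
          Path g x C₁ z E₁ ∧ Path g z C₂ x E₂ ∧ Path g y S₁ z E₃ ∧ Path g z S₂ q E₄ := by
        by_contra hno
        set A : Set (Fin n) := {u | Vis g x P u} with hA
        have claim : ∀ u, Vis g y S u → u ∉ A := by
          intro u hVS hVA
          obtain ⟨C₁, C₂, E₁, hPsp, hC₁⟩ := hVA
          obtain ⟨S₁, S₂, E₃, hSsp, hS₁⟩ := hVS
          rw [hPsp] at hP
          obtain ⟨z', E₁', E₂', hA1, hA2, -⟩ := path_append_destruct hP
          obtain ⟨hz', -⟩ := path_unique hg hA1 hC₁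
          subst hz'
          rw [hSsp] at hS
          obtain ⟨z'', E₃', E₄', hB1, hB2, -⟩ := path_append_destruct hS
          obtain ⟨hz'', -⟩ := path_unique hg hB1 hS₁
          subst hz''
          exact hno ⟨C₁, C₂, S₁, S₂, z'', E₁, E₂', E₃, E₄', hPsp, hSsp, hC₁, hA2, hS₁, hB2⟩
        have hyA : y ∉ A := claim y (vis_start y S)
        have hEiff : ∀ v ∈ E', ((v : ℕ × Fin n × Fin n).2.1 ∈ A ↔ v.2.2 ∈ A) := by
          intro v hv
          rw [hE'] at hv
          rcases Multiset.mem_add.mp hv with hv1 | hv1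
          · obtain ⟨ha, hb⟩ := edge_ends_visited hP v hv1
            exact iff_of_true ha hb
          · obtain ⟨ha, hb⟩ := edge_ends_visited hS v hv1
            exact iff_of_false (claim _ ha) (claim _ hb)
        have hstay := path_stay h2 hEiff hyA
        obtain ⟨ℓ₀, P'⟩ := List.exists_cons_of_ne_nil hPnil
        obtain ⟨P', rfl⟩ := P'
        obtain ⟨t, v₁, E_P', hs₀, hP', hEP⟩ := path_cons_destruct hP
        have hv₁ : v₁ ∈ E' := by
          rw [hE', hEP]
          exact Multiset.mem_add.mpr (Or.inl (Multiset.mem_cons_self v₁ E_P'))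
        have := hstay v₁ hv₁
        rcases step_ends hs₀ with ⟨ha, -⟩ | ⟨ha, -⟩
        · exact this (ha ▸ vis_start x (ℓ₀ :: P'))
        · exact this (ha ▸ vis_cons hs₀ (vis_start t P'))
      obtain ⟨C₁, C₂, S₁, S₂, z, E₁, E₂, E₃, E₄, rfl, rfl, hC₁, hC₂, hS₁, hS₂⟩ := hzsplit
      -- first move: reverse the closed subtrail C₂ ++ ℓ :: S₁ (based at z)
      have hZpath : Path g z (C₂ ++ ℓ :: S₁) z (E₂ + (v₀ ::ₘ E₃)) :=
        path_append_of hC₂ (Path.cons hstep hS₁)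
      have hZdeg := path_closed_wdeg hg hZpath
      have hm1 := Move.star (G := G) C₁ (C₂ ++ ℓ :: S₁) S₂ hZdeg
      have e1 : (C₁ ++ C₂) ++ ℓ :: (S₁ ++ S₂) = C₁ ++ ((C₂ ++ ℓ :: S₁) ++ S₂) := by
        simp
      rw [← e1] at hm1
      -- second move: reverse the closed prefix (C₁ ++ starLst S₁) ++ [sl ℓ] (based at p)
      have hUpath : Path g x ((C₁ ++ starLst S₁) ++ [sl ℓ]) x ((E₁ + E₃) + (v₀ ::ₘ 0)) :=
        path_append_of (path_append_of hC₁ (path_star hS₁))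
          (Path.cons (step_star hstep) (Path.nil x))
      have hUdeg := path_closed_wdeg hg hUpath
      have hm2 := Move.star (G := G) [] ((C₁ ++ starLst S₁) ++ [sl ℓ])
        (starLst C₂ ++ S₂) hUdeg
      have e2 : C₁ ++ (starLst (C₂ ++ ℓ :: S₁) ++ S₂) =
          [] ++ (((C₁ ++ starLst S₁) ++ [sl ℓ]) ++ (starLst C₂ ++ S₂)) := by
        rw [starLst_append, starLst_cons]
        simp
      rw [← e2] at hm2
      have e3 : [] ++ (starLst ((C₁ ++ starLst S₁) ++ [sl ℓ]) ++ (starLst C₂ ++ S₂)) =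
          ℓ :: ((S₁ ++ starLst C₁) ++ (starLst C₂ ++ S₂)) := by
        rw [starLst_concat, starLst_append, starLst_starLst]
        simp [sl]
      rw [e3] at hm2
      refine ⟨(S₁ ++ starLst C₁) ++ (starLst C₂ ++ S₂), ?_⟩
      exact rel_trans (Relation.ReflTransGen.single hm1)
        (rel_trans (Relation.ReflTransGen.single hm2)
          (front_fix hg hstep hf _))
  · -- the occurrence enters p
    subst hyp
    have hUpath : Path g y (P ++ [ℓ]) y (E_P + (v₀ ::ₘ 0)) :=
      path_append_of hP (Path.cons hstep (Path.nil y))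
    have hUdeg := path_closed_wdeg hg hUpath
    have hm := Move.star (G := G) [] (P ++ [ℓ]) S hUdeg
    have e1 : P ++ ℓ :: S = [] ++ ((P ++ [ℓ]) ++ S) := by simp
    rw [← e1] at hm
    have e2 : [] ++ (starLst (P ++ [ℓ]) ++ S) = sl ℓ :: (starLst P ++ S) := by
      rw [starLst_concat]
      simp
    rw [e2] at hm
    exact ⟨starLst P ++ S, rel_trans (Relation.ReflTransGen.single hm)
      (front_fix hg (step_star hstep) hf _)⟩

theorem trail_rel (hg : Function.Injective g) :
    ∀ (L₂ L₁ : List (ℕ × G × Bool)) (p q : Fin n) (E : Multiset (ℕ × Fin n × Fin n)),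
      Path g p L₁ q E → Path g p L₂ q E → Rel L₁ L₂ := by
  intro L₂
  induction L₂ with
  | nil =>
    intro L₁ p q E h1 h2
    cases h2
    obtain ⟨rfl, -⟩ := path_nil_edges h1
    exact Relation.ReflTransGen.refl
  | cons f L₂' ih =>
    intro L₁ p q E h1 h2
    obtain ⟨w, v₀, E'', hf, hL₂', rfl⟩ := path_cons_destruct h2
    obtain ⟨T, hrel⟩ := core hg h1 hf hL₂' rfl
    have hpath : Path g p (f :: T) q (v₀ ::ₘ E'') := rel_pres hg hrel h1
    obtain ⟨w', v', E₂, hf', hT, hEeq⟩ := path_cons_destruct hpath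
    obtain ⟨hww, hvv⟩ := step_unique hg hf' hf
    rw [hww] at hT
    rw [hvv] at hEeq
    have hE₂ : E₂ = E'' := (Multiset.cons_inj_right v₀).mp hEeq.symm
    rw [hE₂] at hT
    exact rel_trans hrel (rel_cons f (ih T w q E'' hT hL₂'))
section MatrixEntries

variable {F : Type*} [Field F]
variable {A : ℕ → G → Bool → Matrix (Fin n) (Fin n) (MvPolynomial (ℕ × Fin n × Fin n) F)}

lemma entry_step
    (hA : ∀ (m : ℕ) (c : G) (p q : Fin n),
      (A m c false p q = if g p * c = g q then MvPolynomial.X (m, p, q) else 0) ∧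
      A m c true = (A m c false)ᵀ)
    (hg : Function.Injective g) {p ℓ y v} (hs : Step g p ℓ y v) (s : Fin n) :
    A ℓ.1 ℓ.2.1 ℓ.2.2 p s = if s = y then MvPolynomial.X v else 0 := by
  obtain ⟨m, c, b⟩ := ℓ
  rcases hs with ⟨hb, he, hv⟩ | ⟨hb, he, hv⟩ <;> simp only at hb he hv <;>
    subst hb <;> subst hv
  · rw [(hA m c p s).1]
    by_cases hsy : s = y
    · subst hsy; rw [if_pos he, if_pos rfl]
    · rw [if_neg fun hcon => hsy (hg (hcon.symm.trans he)), if_neg hsy]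
  · rw [show A m c true = (A m c false)ᵀ from (hA m c p s).2, Matrix.transpose_apply,
      (hA m c s p).1]
    by_cases hsy : s = y
    · subst hsy; rw [if_pos he, if_pos rfl]
    · rw [if_neg, if_neg hsy]
      intro hcon
      exact hsy (hg (mul_right_cancel (hcon.trans he.symm)))

lemma entry_of_path
    (hA : ∀ (m : ℕ) (c : G) (p q : Fin n),
      (A m c false p q = if g p * c = g q then MvPolynomial.X (m, p, q) else 0) ∧
      A m c true = (A m c false)ᵀ)
    (hg : Function.Injective g) {L p t E} (h : Path g p L t E) (q : Fin n) :
    (L.map (fun ℓ => A ℓ.1 ℓ.2.1 ℓ.2.2)).prod p q =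
      if q = t then (MvPolynomial.monomial (Multiset.toFinsupp E) (1 : F)) else 0 := by
  induction h generalizing q with
  | nil p =>
    simp only [List.map_nil, List.prod_nil, Matrix.one_apply]
    rw [show Multiset.toFinsupp (0 : Multiset (ℕ × Fin n × Fin n)) = 0 from map_zero _]
    simp [MvPolynomial.monomial_zero', eq_comm]
  | @cons p ℓ y v L q' E hs hp ih =>
    rw [List.map_cons, List.prod_cons, Matrix.mul_apply]
    have hsum : ∀ s : Fin n, A ℓ.1 ℓ.2.1 ℓ.2.2 p s *
        (L.map (fun ℓ => A ℓ.1 ℓ.2.1 ℓ.2.2)).prod s q =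
        if s = y then MvPolynomial.X v *
          (L.map (fun ℓ => A ℓ.1 ℓ.2.1 ℓ.2.2)).prod s q else 0 := by
      intro s
      rw [entry_step hA hg hs s, ite_mul, zero_mul]
    rw [Finset.sum_congr rfl (fun s _ => hsum s), Finset.sum_ite_eq' Finset.univ y _,
      if_pos (Finset.mem_univ y), ih q, mul_ite, mul_zero]
    have hmon : MvPolynomial.X v * MvPolynomial.monomial (Multiset.toFinsupp E) (1 : F) =
        MvPolynomial.monomial (Multiset.toFinsupp (v ::ₘ E)) (1 : F) := by
      rw [show (MvPolynomial.X v : MvPolynomial (ℕ × Fin n × Fin n) F) =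
        MvPolynomial.monomial (Finsupp.single v 1) 1 from rfl, MvPolynomial.monomial_mul,
        one_mul, show (v ::ₘ E) = {v} + E from (Multiset.singleton_add v E).symm,
        map_add, Multiset.toFinsupp_singleton]
    rw [hmon]

lemma entry_of_no_path
    (hA : ∀ (m : ℕ) (c : G) (p q : Fin n),
      (A m c false p q = if g p * c = g q then MvPolynomial.X (m, p, q) else 0) ∧
      A m c true = (A m c false)ᵀ)
    (hg : Function.Injective g) :
    ∀ (L : List (ℕ × G × Bool)) (p : Fin n),
      (∀ t E, ¬ Path g p L t E) → ∀ q,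
      (L.map (fun ℓ => A ℓ.1 ℓ.2.1 ℓ.2.2)).prod p q = 0 := by
  intro L
  induction L with
  | nil => intro p hno q; exact absurd (Path.nil p) (hno p 0)
  | cons ℓ L ih =>
    intro p hno q
    rw [List.map_cons, List.prod_cons, Matrix.mul_apply]
    by_cases hstep : ∃ y v, Step g p ℓ y v
    · obtain ⟨y, v, hs⟩ := hstep
      have hrest : ∀ t E, ¬ Path g y L t E :=
        fun t E hp => hno t (v ::ₘ E) (Path.cons hs hp)
      refine Finset.sum_eq_zero fun s _ => ?_
      rw [entry_step hA hg hs s]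
      by_cases hsy : s = y
      · subst hsy; rw [if_pos rfl, ih s hrest q, mul_zero]
      · rw [if_neg hsy, zero_mul]
    · refine Finset.sum_eq_zero fun s _ => ?_
      have hzero : A ℓ.1 ℓ.2.1 ℓ.2.2 p s = 0 := by
        obtain ⟨m, c, b⟩ := ℓ
        cases b
        · rw [(hA m c p s).1, if_neg]
          intro hcon
          exact hstep ⟨s, (m, p, s), Or.inl ⟨rfl, hcon, rfl⟩⟩
        · rw [show A m c true = (A m c false)ᵀ from (hA m c p s).2,
            Matrix.transpose_apply, (hA m c s p).1, if_neg]
          intro hcon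
          exact hstep ⟨s, (m, s, p), Or.inr ⟨rfl, hcon, rfl⟩⟩
      rw [hzero, zero_mul]

lemma path_of_ne_zero
    (hA : ∀ (m : ℕ) (c : G) (p q : Fin n),
      (A m c false p q = if g p * c = g q then MvPolynomial.X (m, p, q) else 0) ∧
      A m c true = (A m c false)ᵀ)
    (hg : Function.Injective g) {L : List (ℕ × G × Bool)} {p q : Fin n}
    (h : (L.map (fun ℓ => A ℓ.1 ℓ.2.1 ℓ.2.2)).prod p q ≠ 0) :
    ∃ E, Path g p L q E := by
  by_cases hex : ∃ t E, Path g p L t E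
  · obtain ⟨t, E, hp⟩ := hex
    have he := entry_of_path hA hg hp q
    by_cases hqt : q = t
    · subst hqt; exact ⟨E, hp⟩
    · rw [if_neg hqt] at he; exact absurd he h
  · push_neg at hex
    exact absurd (entry_of_no_path hA hg L p (fun t E => hex t E) q) h

end MatrixEntries
section Ideal

variable (F : Type*) [Field F]

lemma starF_of (w : FreeMonoid (ℕ × G × Bool)) :
    starF F G (MonoidAlgebra.of F (FreeMonoid (ℕ × G × Bool)) w) =
      MonoidAlgebra.of F (FreeMonoid (ℕ × G × Bool)) (starW w) := by
  have h0 : starF F G (MonoidAlgebra.of F (FreeMonoid (ℕ × G × Bool)) w)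
      = MonoidAlgebra.mapDomainLinearMap F F starW (MonoidAlgebra.of F (FreeMonoid (ℕ × G × Bool)) w) := rfl
  rw [h0, MonoidAlgebra.of_apply, MonoidAlgebra.of_apply]
  exact MonoidAlgebra.mapDomainLinearMap_single ..

lemma substHom_xvar (v : ℕ × G × Bool → FreeGS F G) (k : ℕ) (c : G) (b : Bool) :
    substHom v (xvar F k c b) = v (k, c, b) := by
  rw [substHom, xvar, MonoidAlgebra.lift_of]
  rfl

lemma support_of (w : FreeMonoid (ℕ × G × Bool)) :
    (MonoidAlgebra.of F (FreeMonoid (ℕ × G × Bool)) w).coeff.support = {w} := by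
  rw [MonoidAlgebra.of_apply, MonoidAlgebra.coeff_single]
  exact Finsupp.support_single_ne_zero w one_ne_zero

/-- substitution sending x_{1,e} to u -/
def subsOne (u : FreeGS F G) : ℕ × G × Bool → FreeGS F G :=
  fun t => if t.1 = 1 ∧ t.2.1 = 1 then (if t.2.2 then starF F G u else u) else 0

lemma subsOne_false (u : FreeGS F G) : subsOne F u (1, 1, false) = u := by simp [subsOne]

lemma subsOne_true (u : FreeGS F G) : subsOne F u (1, 1, true) = starF F G u := by
  simp [subsOne]

lemma admissible_subsOne (U : List (ℕ × G × Bool)) (hU : wdegL U = 1) :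
    Admissible (subsOne F (MonoidAlgebra.of F (FreeMonoid (ℕ × G × Bool))
      (FreeMonoid.ofList U))) := by
  constructor
  · intro k c w hw
    by_cases hkc : k = 1 ∧ c = 1
    · obtain ⟨rfl, rfl⟩ := hkc
      rw [subsOne_false, support_of, Finset.mem_singleton] at hw
      subst hw
      exact hU
    · have h0 : subsOne F (MonoidAlgebra.of F (FreeMonoid (ℕ × G × Bool))
          (FreeMonoid.ofList U)) (k, c, false) = 0 := by
        simp only [subsOne, if_neg hkc]
      rw [h0] at hw
      simp at hw
  · intro k c
    by_cases hkc : k = 1 ∧ c = 1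
    · obtain ⟨rfl, rfl⟩ := hkc
      rw [subsOne_true, subsOne_false]
    · have h0 : ∀ b, subsOne F (MonoidAlgebra.of F (FreeMonoid (ℕ × G × Bool))
          (FreeMonoid.ofList U)) (k, c, b) = 0 := by
        intro b; simp only [subsOne, if_neg hkc]
      rw [h0, h0, map_zero]

/-- substitution sending x_{1,e} to u and x_{2,e} to v -/
def subsTwo (u v : FreeGS F G) : ℕ × G × Bool → FreeGS F G :=
  fun t => if t.1 = 1 ∧ t.2.1 = 1 then (if t.2.2 then starF F G u else u)
    else if t.1 = 2 ∧ t.2.1 = 1 then (if t.2.2 then starF F G v else v) else 0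

lemma subsTwo_one (u v : FreeGS F G) : subsTwo F u v (1, 1, false) = u := by simp [subsTwo]

lemma subsTwo_two (u v : FreeGS F G) : subsTwo F u v (2, 1, false) = v := by simp [subsTwo]

lemma admissible_subsTwo (U V : List (ℕ × G × Bool)) (hU : wdegL U = 1)
    (hV : wdegL V = 1) :
    Admissible (subsTwo F (MonoidAlgebra.of F (FreeMonoid (ℕ × G × Bool))
        (FreeMonoid.ofList U))
      (MonoidAlgebra.of F (FreeMonoid (ℕ × G × Bool)) (FreeMonoid.ofList V))) := by
  constructor
  · intro k c w hw
    by_cases hkc : k = 1 ∧ c = 1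
    · obtain ⟨rfl, rfl⟩ := hkc
      rw [subsTwo_one, support_of, Finset.mem_singleton] at hw
      subst hw
      exact hU
    · by_cases hkc2 : k = 2 ∧ c = 1
      · obtain ⟨rfl, rfl⟩ := hkc2
        rw [subsTwo_two, support_of, Finset.mem_singleton] at hw
        subst hw
        exact hV
      · have h0 : subsTwo F (MonoidAlgebra.of F (FreeMonoid (ℕ × G × Bool))
            (FreeMonoid.ofList U)) (MonoidAlgebra.of F (FreeMonoid (ℕ × G × Bool))
            (FreeMonoid.ofList V)) (k, c, false) = 0 := by
          simp only [subsTwo, if_neg hkc, if_neg hkc2]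
        rw [h0] at hw
        simp at hw
  · intro k c
    by_cases hkc : k = 1 ∧ c = 1
    · obtain ⟨rfl, rfl⟩ := hkc
      simp [subsTwo]
    · by_cases hkc2 : k = 2 ∧ c = 1
      · obtain ⟨rfl, rfl⟩ := hkc2
        simp only [subsTwo, if_neg (by simp : ¬((2:ℕ) = 1 ∧ (1:G) = 1))]
        simp
      · have h0 : ∀ b, subsTwo F (MonoidAlgebra.of F (FreeMonoid (ℕ × G × Bool))
            (FreeMonoid.ofList U)) (MonoidAlgebra.of F (FreeMonoid (ℕ × G × Bool))
            (FreeMonoid.ofList V)) (k, c, b) = 0 := by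
          intro b; simp only [subsTwo, if_neg hkc, if_neg hkc2]
        rw [h0, h0, map_zero]

lemma move_mem (I : TwoSidedIdeal (FreeGS F G))
    (hI : ∀ f ∈ ({xvar F 1 (1 : G) false * xvar F 2 (1 : G) false -
             xvar F 2 (1 : G) false * xvar F 1 (1 : G) false,
           xvar F 1 (1 : G) false - xvar F 1 (1 : G) true} : Set (FreeGS F G)),
      ∀ v, Admissible v → substHom v f ∈ I)
    {L L' : List (ℕ × G × Bool)} (hm : Move L L') :
    MonoidAlgebra.of F (FreeMonoid (ℕ × G × Bool)) (FreeMonoid.ofList L) -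
      MonoidAlgebra.of F (FreeMonoid (ℕ × G × Bool)) (FreeMonoid.ofList L') ∈ I := by
  cases hm with
  | star A U B hU =>
    set u : FreeGS F G := MonoidAlgebra.of F (FreeMonoid (ℕ × G × Bool))
      (FreeMonoid.ofList U) with hu
    set a : FreeGS F G := MonoidAlgebra.of F (FreeMonoid (ℕ × G × Bool))
      (FreeMonoid.ofList A) with ha
    set b : FreeGS F G := MonoidAlgebra.of F (FreeMonoid (ℕ × G × Bool))
      (FreeMonoid.ofList B) with hb
    have hadm := admissible_subsOne F U hU
    have hgen := hI _ (Set.mem_insert_iff.mpr (Or.inr rfl)) _ hadm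
    rw [map_sub, substHom_xvar, substHom_xvar, subsOne_false, subsOne_true] at hgen
    have hstar : MonoidAlgebra.of F (FreeMonoid (ℕ × G × Bool))
        (FreeMonoid.ofList (starLst U)) = starF F G u := by
      rw [hu, starF_of, starW_ofList]
    rw [FreeMonoid.ofList_append, FreeMonoid.ofList_append, _root_.map_mul, _root_.map_mul,
      FreeMonoid.ofList_append, FreeMonoid.ofList_append, _root_.map_mul, _root_.map_mul, hstar,
      ← ha, ← hb, ← hu]
    have key : a * (u * b) - a * (starF F G u * b) = a * ((u - starF F G u) * b) := by
      noncomm_ring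
    rw [key]
    exact I.mul_mem_left _ _ (I.mul_mem_right _ _ hgen)
  | swap A U V B hU hV =>
    set u : FreeGS F G := MonoidAlgebra.of F (FreeMonoid (ℕ × G × Bool))
      (FreeMonoid.ofList U) with hu
    set w : FreeGS F G := MonoidAlgebra.of F (FreeMonoid (ℕ × G × Bool))
      (FreeMonoid.ofList V) with hw
    set a : FreeGS F G := MonoidAlgebra.of F (FreeMonoid (ℕ × G × Bool))
      (FreeMonoid.ofList A) with ha
    set b : FreeGS F G := MonoidAlgebra.of F (FreeMonoid (ℕ × G × Bool))
      (FreeMonoid.ofList B) with hb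
    have hadm := admissible_subsTwo F U V hU hV
    have hgen := hI _ (Set.mem_insert _ _) _ hadm
    rw [map_sub, _root_.map_mul, _root_.map_mul, substHom_xvar, substHom_xvar,
      subsTwo_one, subsTwo_two] at hgen
    rw [FreeMonoid.ofList_append, FreeMonoid.ofList_append, FreeMonoid.ofList_append,
      _root_.map_mul, _root_.map_mul, _root_.map_mul,
      FreeMonoid.ofList_append, FreeMonoid.ofList_append, FreeMonoid.ofList_append,
      _root_.map_mul, _root_.map_mul, _root_.map_mul, ← ha, ← hb, ← hu, ← hw]
    have key : a * (u * (w * b)) - a * (w * (u * b)) = a * ((u * w - w * u) * b) := by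
      noncomm_ring
    rw [key]
    exact I.mul_mem_left _ _ (I.mul_mem_right _ _ hgen)

lemma rel_mem (I : TwoSidedIdeal (FreeGS F G))
    (hI : ∀ f ∈ ({xvar F 1 (1 : G) false * xvar F 2 (1 : G) false -
             xvar F 2 (1 : G) false * xvar F 1 (1 : G) false,
           xvar F 1 (1 : G) false - xvar F 1 (1 : G) true} : Set (FreeGS F G)),
      ∀ v, Admissible v → substHom v f ∈ I)
    {L L' : List (ℕ × G × Bool)} (hr : Rel L L') :
    MonoidAlgebra.of F (FreeMonoid (ℕ × G × Bool)) (FreeMonoid.ofList L) -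
      MonoidAlgebra.of F (FreeMonoid (ℕ × G × Bool)) (FreeMonoid.ofList L') ∈ I := by
  induction hr with
  | refl => rw [sub_self]; exact I.zero_mem
  | tail h1 h2 ih =>
    have h3 := move_mem F I hI h2
    have h4 := I.add_mem ih h3
    rwa [sub_add_sub_cancel] at h4

end Ideal

end Stmt18Aux


open scoped Classical

/-- Let J be the T_G^*-ideal generated by x_{1,e}x_{2,e} − x_{2,e}x_{1,e}
and x_{1,e} − x_{1,e}^*. If two (G,*)-monomials m₁ = x_{i_1,h_1}^{ε_1}⋯x_{i_r,h_r}^{ε_r}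
and m₂ = x_{j_1,h'_1}^{η_1}⋯x_{j_l,h'_l}^{η_l} evaluate on generic (G,*)-matrices to
matrices having the same nonzero entry in the same position, then m₁ ≡ m₂ mod J. -/
theorem stmt_18 (F : Type*) [Field F] [Infinite F] (G : Type*) [Group G] (n : ℕ)
    (g : Fin n → G) (hinj : Function.Injective g)
    (A : ℕ → G → Bool → Matrix (Fin n) (Fin n) (MvPolynomial (ℕ × Fin n × Fin n) F))
    (hA : ∀ (m : ℕ) (c : G) (p q : Fin n),
      (A m c false p q = if g p * c = g q then MvPolynomial.X (m, p, q) else 0) ∧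
      A m c true = (A m c false)ᵀ)
    (r l : ℕ) (i : Fin r → ℕ) (h : Fin r → G) (ε : Fin r → Bool)
    (j : Fin l → ℕ) (h' : Fin l → G) (η : Fin l → Bool)
    (p q : Fin n)
    (hsame : (List.ofFn fun k : Fin r => A (i k) (h k) (ε k)).prod p q =
             (List.ofFn fun k : Fin l => A (j k) (h' k) (η k)).prod p q)
    (hnz : (List.ofFn fun k : Fin r => A (i k) (h k) (ε k)).prod p q ≠ 0) :
    (MonoidAlgebra.of F (FreeMonoid (ℕ × G × Bool))
        (FreeMonoid.ofList (List.ofFn fun k : Fin r => (i k, h k, ε k))) : FreeGS F G) -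
      MonoidAlgebra.of F (FreeMonoid (ℕ × G × Bool))
        (FreeMonoid.ofList (List.ofFn fun k : Fin l => (j k, h' k, η k)))
      ∈ TIdealGen
          {xvar F 1 (1 : G) false * xvar F 2 (1 : G) false -
             xvar F 2 (1 : G) false * xvar F 1 (1 : G) false,
           xvar F 1 (1 : G) false - xvar F 1 (1 : G) true} := by
  classical
  have hmap₁ : (List.ofFn fun k : Fin r => A (i k) (h k) (ε k)) =
      (List.ofFn fun k : Fin r => ((i k, h k, ε k) : ℕ × G × Bool)).map
        (fun ℓ => A ℓ.1 ℓ.2.1 ℓ.2.2) := by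
    rw [List.map_ofFn]; rfl
  have hmap₂ : (List.ofFn fun k : Fin l => A (j k) (h' k) (η k)) =
      (List.ofFn fun k : Fin l => ((j k, h' k, η k) : ℕ × G × Bool)).map
        (fun ℓ => A ℓ.1 ℓ.2.1 ℓ.2.2) := by
    rw [List.map_ofFn]; rfl
  rw [hmap₁] at hnz hsame
  rw [hmap₂] at hsame
  obtain ⟨E₁, hp₁⟩ := Stmt18Aux.path_of_ne_zero hA hinj hnz
  have hnz₂ : (((List.ofFn fun k : Fin l => ((j k, h' k, η k) : ℕ × G × Bool)).map
      (fun ℓ => A ℓ.1 ℓ.2.1 ℓ.2.2)).prod) p q ≠ 0 := by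
    rw [← hsame]; exact hnz
  obtain ⟨E₂, hp₂⟩ := Stmt18Aux.path_of_ne_zero hA hinj hnz₂
  have hEeq : E₁ = E₂ := by
    have e1 := Stmt18Aux.entry_of_path hA hinj hp₁ q
    have e2 := Stmt18Aux.entry_of_path hA hinj hp₂ q
    rw [if_pos rfl] at e1 e2
    rw [e1, e2] at hsame
    rcases (MvPolynomial.monomial_eq_monomial_iff _ _ _ _).mp hsame with ⟨hf, -⟩ | ⟨h10, -⟩
    · exact Multiset.toFinsupp.injective hf
    · exact absurd h10 one_ne_zero
  rw [← hEeq] at hp₂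
  have hrel := Stmt18Aux.trail_rel hinj _ _ p q E₁ hp₁ hp₂
  intro I hI
  exact Stmt18Aux.rel_mem F I hI hrel

end
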